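/- arXiv:2009.05251 — 2 statements merged into one kernel-verified Lean document; each statement's English description precedes it below -/
import Mathlib

section
/- Suppose $S_1(T) = \int_0^T S(t)\,dt$ satisfies $|S_1(T) - c| \le A_0 + A_1 \log T$ for all $T \ge 2\pi$ with constants $c$, $A_0, A_1 \ge 0$. Then for all $T \ge 2\pi$, $\big| \int_T^{\infty} \frac{S(t)}{t^2}\,dt \big| \le \frac{2A_0 + 0.5 A_1 + 2A_1 \log T}{T^2}$. -/
open Real Filter MeasureTheory Set

noncomputable section

open Classical in
/-- The multiplicity of `ρ` as a zero of the Riemann zeta function. -/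
def zetaMult (ρ : ℂ) : ℕ :=
  if h : AnalyticAt ℂ riemannZeta ρ then (analyticOrderAt riemannZeta ρ).toNat else 0

/-- The nontrivial zeros of the Riemann zeta function. -/
def zetaZeros : Set ℂ := {ρ | riemannZeta ρ = 0 ∧ 0 < ρ.re ∧ ρ.re < 1}

/-- The set `𝓕` of positive ordinates of nontrivial zeros of zeta. -/
def zetaOrdinates : Set ℝ := {t | 0 < t ∧ ∃ ρ ∈ zetaZeros, ρ.im = t}

/-- `G T = ∑_{0 < γ ≤ T} 1/γ`, with multiplicity. -/
def G (T : ℝ) : ℝ :=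
  ∑' ρ : {ρ : ℂ // ρ ∈ zetaZeros ∧ 0 < ρ.im ∧ ρ.im ≤ T}, (zetaMult ρ : ℝ) / ρ.1.im

/-- `N T`: number of nontrivial zeros with ordinate in `(0, T]`, with multiplicity. -/
def Ncount (T : ℝ) : ℝ :=
  ∑' ρ : {ρ : ℂ // ρ ∈ zetaZeros ∧ 0 < ρ.im ∧ ρ.im ≤ T}, (zetaMult ρ : ℝ)

/-- The smooth approximation `L T`. -/
def Lsmooth (T : ℝ) : ℝ := T / (2 * π) * (Real.log (T / (2 * π)) - 1) + 7 / 8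

/-- `Q = N - L`. -/
def Q (T : ℝ) : ℝ := Ncount T - Lsmooth T

private lemma logTendstoAux : Tendsto (fun u : ℝ => Real.log u / u ^ 2) atTop (nhds 0) := by
  have h := (isLittleO_log_rpow_atTop (by norm_num : (0:ℝ) < 2)).tendsto_div_nhds_zero
  refine h.congr (fun u => ?_)
  rw [show ((2:ℝ) = ((2:ℕ):ℝ)) by norm_num, Real.rpow_natCast]

private lemma tail_int (a₀ a₁ T : ℝ) (h₀ : 0 ≤ a₀) (h₁ : 0 ≤ a₁) (hT : 1 ≤ T) :
    IntegrableOn (fun u : ℝ => 2 * (a₀ + a₁ * Real.log u) / u ^ 3) (Ioi T) ∧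
    ∫ u in Ioi T, 2 * (a₀ + a₁ * Real.log u) / u ^ 3
      = (a₀ + a₁ / 2 + a₁ * Real.log T) / T ^ 2 := by
  set g : ℝ → ℝ := fun u => -((a₀ + a₁ / 2 + a₁ * Real.log u) / u ^ 2) with hg
  have hderiv : ∀ x ∈ Ici T, HasDerivAt g (2 * (a₀ + a₁ * Real.log x) / x ^ 3) x := by
    intro x hx
    have hx0 : (0:ℝ) < x := lt_of_lt_of_le one_pos (hT.trans hx)
    have h1 : HasDerivAt (fun u : ℝ => a₀ + a₁ / 2 + a₁ * Real.log u) (a₁ * x⁻¹) x :=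
      ((Real.hasDerivAt_log hx0.ne').const_mul a₁).const_add _
    have h2 : HasDerivAt (fun u : ℝ => u ^ 2) (2 * x) x := by
      simpa using hasDerivAt_pow 2 x
    have h3 := (h1.div h2 (by positivity)).neg
    refine h3.congr_deriv ?_
    field_simp
    ring
  have hpos : ∀ x ∈ Ioi T, 0 ≤ 2 * (a₀ + a₁ * Real.log x) / x ^ 3 := by
    intro x hx
    have hx1 : (1:ℝ) ≤ x := hT.trans hx.le
    have : 0 ≤ Real.log x := Real.log_nonneg hx1
    have hx0 : (0:ℝ) < x := lt_of_lt_of_le one_pos hx1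
    positivity
  have htend : Tendsto g atTop (nhds 0) := by
    have h1 : Tendsto (fun u : ℝ => (a₀ + a₁ / 2) / u ^ 2) atTop (nhds 0) :=
      tendsto_const_nhds.div_atTop (tendsto_pow_atTop (by norm_num))
    have h2 : Tendsto (fun u : ℝ => (a₀ + a₁ / 2) / u ^ 2 + a₁ * (Real.log u / u ^ 2))
        atTop (nhds (0 + a₁ * 0)) := h1.add (logTendstoAux.const_mul a₁)
    have h3 : Tendsto (fun u : ℝ => -((a₀ + a₁ / 2) / u ^ 2 + a₁ * (Real.log u / u ^ 2)))
        atTop (nhds (-(0 + a₁ * 0))) := h2.neg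
    simp only [mul_zero, add_zero, neg_zero] at h3
    refine h3.congr (fun u => ?_)
    simp only [hg]
    ring
  have hint := integrableOn_Ioi_deriv_of_nonneg' hderiv hpos htend
  refine ⟨hint, ?_⟩
  rw [integral_Ioi_of_hasDerivAt_of_nonneg' hderiv hpos htend]
  simp only [hg]
  ring

/-- If `S₁(T) = ∫₀^T S` satisfies `|S₁(T) - c| ≤ A₀ + A₁ log T` for `T ≥ 2π`, then
`|∫_T^∞ S(t)/t² dt| ≤ (2A₀ + 0.5A₁ + 2A₁ log T)/T²` for `T ≥ 2π`. -/
theorem tail_integral_S_bound (S : ℝ → ℝ) (hS : LocallyIntegrable S)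
    (c A₀ A₁ : ℝ) (hA₀ : 0 ≤ A₀) (hA₁ : 0 ≤ A₁)
    (hS₁ : ∀ T : ℝ, 2 * π ≤ T → |(∫ t in Ioc (0:ℝ) T, S t) - c| ≤ A₀ + A₁ * Real.log T) :
    ∀ T : ℝ, 2 * π ≤ T →
      |∫ t in Ioi T, S t / t ^ 2| ≤ (2 * A₀ + 0.5 * A₁ + 2 * A₁ * Real.log T) / T ^ 2 := by
  intro T hT
  have hT1 : (1:ℝ) ≤ T := le_trans (by nlinarith [Real.pi_gt_three]) hT
  have hT0 : (0:ℝ) < T := lt_of_lt_of_le one_pos hT1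
  have hlogT : 0 ≤ Real.log T := Real.log_nonneg hT1
  have hRHS : 0 ≤ (2 * A₀ + 0.5 * A₁ + 2 * A₁ * Real.log T) / T ^ 2 :=
    div_nonneg (by nlinarith) (by positivity)
  by_cases hInt : IntegrableOn (fun t => S t / t ^ 2) (Ioi T)
  swap
  · rw [MeasureTheory.integral_undef hInt]
    simpa using hRHS
  -- basic integrability facts
  have hIoc : ∀ a b : ℝ, IntegrableOn S (Ioc a b) := fun a b =>
    (hS.integrableOn_isCompact isCompact_Icc).mono_set Ioc_subset_Icc_self
  have hpow : ∀ t : ℝ, 1 ≤ t → IntegrableOn (fun u : ℝ => 2 / u ^ 3) (Ioi t) ∧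
      ∫ u in Ioi t, 2 / u ^ 3 = 1 / t ^ 2 := by
    intro t ht
    have h := tail_int 1 0 t zero_le_one le_rfl ht
    simpa using h
  set P : ℝ → ℝ := fun x => ∫ t in Ioc (0:ℝ) x, S t with hP
  have hPsub : ∀ u : ℝ, T ≤ u → ∫ t in Ioc T u, S t = P u - P T := by
    intro u hu
    have hunion : Ioc (0:ℝ) T ∪ Ioc T u = Ioc 0 u := Ioc_union_Ioc_eq_Ioc hT0.le hu
    have hadd := setIntegral_union (f := S) (μ := (volume : Measure ℝ))
      (Ioc_disjoint_Ioc_of_le le_rfl) measurableSet_Ioc (hIoc 0 T) (hIoc T u)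
    rw [hunion] at hadd
    simp only [hP]
    linarith [hadd]
  -- Fubini setup
  set F : ℝ × ℝ → ℝ :=
    Set.indicator {p : ℝ × ℝ | p.1 ≤ p.2} (fun p => S p.1 * (2 / p.2 ^ 3)) with hF
  have hsetm : MeasurableSet {p : ℝ × ℝ | p.1 ≤ p.2} :=
    measurableSet_le measurable_fst measurable_snd
  have hFm : AEStronglyMeasurable F
      ((volume.restrict (Ioi T)).prod (volume.restrict (Ioi T))) := by
    apply AEStronglyMeasurable.indicator _ hsetm
    exact ((hS.aestronglyMeasurable.restrict).comp_fst).mul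
      ((measurable_const.div (measurable_snd.pow_const 3)).aestronglyMeasurable)
  have hslice1 : ∀ t u : ℝ, F (t, u) = Set.indicator (Ici t)
      (fun u => S t * (2 / u ^ 3)) u := by
    intro t u
    by_cases h : t ≤ u <;> simp [hF, Set.indicator_apply, h]
  have hslice2 : ∀ u t : ℝ, F (t, u) = Set.indicator (Iic u)
      (fun t => S t * (2 / u ^ 3)) t := by
    intro u t
    by_cases h : t ≤ u <;> simp [hF, Set.indicator_apply, h]
  have hIci : ∀ t : ℝ, T < t → Ici t ∩ Ioi T = Ici t := fun t ht =>
    inter_eq_left.2 (fun x hx => lt_of_lt_of_le ht hx)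
  have hinner1 : ∀ t : ℝ, T < t →
      ∫ u in Ioi T, F (t, u) = S t / t ^ 2 := by
    intro t ht
    calc ∫ u in Ioi T, F (t, u) = S t * ∫ u in Ioi t, 2 / u ^ 3 := by
          simp only [hslice1 t]
          rw [integral_indicator measurableSet_Ici,
            Measure.restrict_restrict measurableSet_Ici, hIci t ht,
            integral_Ici_eq_integral_Ioi, integral_const_mul]
      _ = S t / t ^ 2 := by rw [(hpow t (hT1.trans ht.le)).2]; ring
  have hinner1n : ∀ t : ℝ, T < t →
      ∫ u in Ioi T, ‖F (t, u)‖ = ‖S t / t ^ 2‖ := by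
    intro t ht
    have h1t : (1:ℝ) ≤ t := hT1.trans ht.le
    have ht0 : (0:ℝ) < t := lt_of_lt_of_le one_pos h1t
    calc ∫ u in Ioi T, ‖F (t, u)‖ = ∫ u in Ioi t, ‖S t‖ * (2 / u ^ 3) := by
          simp only [hslice1 t, norm_indicator_eq_indicator_norm]
          rw [integral_indicator measurableSet_Ici,
            Measure.restrict_restrict measurableSet_Ici, hIci t ht,
            integral_Ici_eq_integral_Ioi]
          refine setIntegral_congr_fun measurableSet_Ioi (fun u hu => ?_)
          have hu0 : (0:ℝ) < u := ht0.trans hu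
          rw [norm_mul, Real.norm_of_nonneg (by positivity : (0:ℝ) ≤ 2 / u ^ 3)]
      _ = ‖S t‖ * (1 / t ^ 2) := by rw [integral_const_mul, (hpow t h1t).2]
      _ = ‖S t / t ^ 2‖ := by
          rw [norm_div, Real.norm_of_nonneg (by positivity : (0:ℝ) ≤ t ^ 2)]
          ring
  have hsliceInt : ∀ t : ℝ, Integrable (fun u => F (t, u)) (volume.restrict (Ioi T)) := by
    intro t
    simp only [hslice1 t]
    exact ((hpow T hT1).1.const_mul (S t)).indicator measurableSet_Ici
  have hFint : Integrable F ((volume.restrict (Ioi T)).prod (volume.restrict (Ioi T))) := by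
    rw [MeasureTheory.integrable_prod_iff hFm]
    constructor
    · exact Eventually.of_forall (fun t => hsliceInt t)
    · apply (hInt.norm).congr
      filter_upwards [ae_restrict_mem measurableSet_Ioi] with t ht
      exact (hinner1n t ht).symm
  have hswap : ∫ t in Ioi T, (∫ u in Ioi T, F (t, u))
      = ∫ u in Ioi T, (∫ t in Ioi T, F (t, u)) :=
    integral_integral_swap (f := fun t u => F (t, u)) hFint
  have hLHS : ∫ t in Ioi T, (∫ u in Ioi T, F (t, u)) = ∫ t in Ioi T, S t / t ^ 2 := by
    refine integral_congr_ae ?_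
    filter_upwards [ae_restrict_mem measurableSet_Ioi] with t ht
    exact hinner1 t ht
  have hinner2 : ∀ u : ℝ, T < u →
      ∫ t in Ioi T, F (t, u) = (P u - P T) * (2 / u ^ 3) := by
    intro u hu
    simp only [hslice2 u]
    rw [integral_indicator measurableSet_Iic,
      Measure.restrict_restrict measurableSet_Iic]
    have hiic : Iic u ∩ Ioi T = Ioc T u := by
      ext x; simp only [mem_inter_iff, mem_Iic, mem_Ioi, mem_Ioc]; tauto
    rw [hiic, integral_mul_const, hPsub u hu.le]
  have hmain : ∫ t in Ioi T, S t / t ^ 2 = ∫ u in Ioi T, (P u - P T) * (2 / u ^ 3) := by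
    rw [← hLHS, hswap]
    refine integral_congr_ae ?_
    filter_upwards [ae_restrict_mem measurableSet_Ioi] with u hu
    exact hinner2 u hu
  -- bound
  have hIntervalInt : ∀ a b : ℝ, IntervalIntegrable S volume a b := fun a b =>
    (hS.integrableOn_isCompact isCompact_uIcc).intervalIntegrable
  have hP'cont : Continuous (fun x : ℝ => ∫ t in (0:ℝ)..x, S t) :=
    intervalIntegral.continuous_primitive hIntervalInt 0
  have hq_meas : AEStronglyMeasurable (fun u => (P u - c) * (2 / u ^ 3))
      (volume.restrict (Ioi T)) := by
    have hcont : ContinuousOn (fun u : ℝ => ((∫ t in (0:ℝ)..u, S t) - c) * (2 / u ^ 3))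
        (Ioi T) := by
      apply ContinuousOn.mul ((hP'cont.sub continuous_const).continuousOn)
      exact ContinuousOn.div continuousOn_const (continuous_pow 3).continuousOn
        (fun u hu => pow_ne_zero _ (ne_of_gt (hT0.trans hu)))
    refine (hcont.aestronglyMeasurable measurableSet_Ioi).congr ?_
    filter_upwards [ae_restrict_mem measurableSet_Ioi] with u hu
    rw [intervalIntegral.integral_of_le (hT0.le.trans hu.le)]
  have hbnd : ∀ᵐ u ∂(volume.restrict (Ioi T)),
      ‖(P u - c) * (2 / u ^ 3)‖ ≤ 2 * (A₀ + A₁ * Real.log u) / u ^ 3 := by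
    filter_upwards [ae_restrict_mem measurableSet_Ioi] with u hu
    have hu0 : (0:ℝ) < u := hT0.trans hu
    have h1 := hS₁ u (hT.trans hu.le)
    rw [norm_mul, Real.norm_of_nonneg (by positivity : (0:ℝ) ≤ 2 / u ^ 3)]
    calc ‖P u - c‖ * (2 / u ^ 3) ≤ (A₀ + A₁ * Real.log u) * (2 / u ^ 3) := by
          refine mul_le_mul_of_nonneg_right ?_ (by positivity)
          simpa [Real.norm_eq_abs, hP] using h1
      _ = 2 * (A₀ + A₁ * Real.log u) / u ^ 3 := by ring
  have hbint := tail_int A₀ A₁ T hA₀ hA₁ hT1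
  have hqint : Integrable (fun u => (P u - c) * (2 / u ^ 3)) (volume.restrict (Ioi T)) :=
    Integrable.mono' hbint.1 hq_meas hbnd
  have h2int : Integrable (fun u : ℝ => (P T - c) * (2 / u ^ 3))
      (volume.restrict (Ioi T)) := (hpow T hT1).1.const_mul _
  have hsplit : ∫ u in Ioi T, (P u - P T) * (2 / u ^ 3)
      = (∫ u in Ioi T, (P u - c) * (2 / u ^ 3)) - (P T - c) * (1 / T ^ 2) := by
    have heq : ∀ u : ℝ, (P u - P T) * (2 / u ^ 3)
        = (P u - c) * (2 / u ^ 3) - (P T - c) * (2 / u ^ 3) := fun u => by ring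
    simp_rw [heq]
    rw [integral_sub hqint h2int, integral_const_mul, (hpow T hT1).2]
  have h1 : |∫ u in Ioi T, (P u - c) * (2 / u ^ 3)|
      ≤ (A₀ + A₁ / 2 + A₁ * Real.log T) / T ^ 2 := by
    rw [← Real.norm_eq_abs, ← hbint.2]
    exact norm_integral_le_of_norm_le hbint.1 hbnd
  have h2 : |P T - c| ≤ A₀ + A₁ * Real.log T := hS₁ T hT
  rw [hmain, hsplit]
  have htri : |(∫ u in Ioi T, (P u - c) * (2 / u ^ 3)) - (P T - c) * (1 / T ^ 2)|
      ≤ |∫ u in Ioi T, (P u - c) * (2 / u ^ 3)| + |(P T - c) * (1 / T ^ 2)| := by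
    exact abs_sub _ _
  have h3 : |(P T - c) * (1 / T ^ 2)| ≤ (A₀ + A₁ * Real.log T) * (1 / T ^ 2) := by
    rw [abs_mul, abs_of_nonneg (by positivity : (0:ℝ) ≤ 1 / T ^ 2)]
    exact mul_le_mul_of_nonneg_right h2 (by positivity)
  have hfinal : (A₀ + A₁ / 2 + A₁ * Real.log T) / T ^ 2
      + (A₀ + A₁ * Real.log T) * (1 / T ^ 2)
      = (2 * A₀ + 0.5 * A₁ + 2 * A₁ * Real.log T) / T ^ 2 := by
    field_simp
    ring
  linarith
end
end

section
/- For $T \ge 2\pi$, the tail $E_2(T) = \int_T^{\infty} \frac{Q(t)}{t^2}\,dt$ satisfies $|E_2(T)| \le \frac{4.27 + 0.12 \log T}{T^2}$. -/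
open Real Filter MeasureTheory Set
open Topology

noncomputable section

lemma aux_deriv_inv_sq {x : ℝ} (hx : x ≠ 0) :
    HasDerivAt (fun u : ℝ => -((u ^ 2)⁻¹)) (2 / x ^ 3) x := by
  have h := ((hasDerivAt_pow 2 x).inv (pow_ne_zero 2 hx)).neg
  refine h.congr_deriv ?_
  field_simp; ring

lemma aux_int_cube {T R : ℝ} (hT : 0 < T) (hTR : T ≤ R) :
    ∫ u in Ioc T R, 2 / u ^ 3 = (T ^ 2)⁻¹ - (R ^ 2)⁻¹ := by
  rw [← intervalIntegral.integral_of_le hTR]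
  have hne : ∀ x ∈ uIcc T R, x ≠ 0 := by
    intro x hx
    rw [uIcc_of_le hTR] at hx
    exact ne_of_gt (lt_of_lt_of_le hT hx.1)
  have := intervalIntegral.integral_eq_sub_of_hasDerivAt
    (f := fun u : ℝ => -((u ^ 2)⁻¹)) (f' := fun u => 2 / u ^ 3)
    (fun x hx => aux_deriv_inv_sq (hne x hx))
    (by
      apply ContinuousOn.intervalIntegrable
      exact continuousOn_const.div (continuousOn_pow 3) (fun x hx => pow_ne_zero 3 (hne x hx)))
  rw [this]; ring

lemma aux_deriv_main {K : ℝ} {x : ℝ} (hx : 0 < x) :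
    HasDerivAt (fun u : ℝ => -((K + 0.0295 + 0.059 * Real.log u) * (u ^ 2)⁻¹))
      ((K + 0.059 * Real.log x) * (2 / x ^ 3)) x := by
  have hlog : HasDerivAt (fun u : ℝ => K + 0.0295 + 0.059 * Real.log u) (0.059 / x) x := by
    simpa [div_eq_mul_inv] using ((Real.hasDerivAt_log (ne_of_gt hx)).const_mul 0.059).const_add (K + 0.0295)
  have hinv : HasDerivAt (fun u : ℝ => (u ^ 2)⁻¹) (-(2 / x ^ 3)) x := by
    have := (aux_deriv_inv_sq (ne_of_gt hx)).neg
    simpa [Pi.neg_def] using this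
  have h := (hlog.mul hinv).neg
  refine h.congr_deriv ?_
  have hx3 : x ^ 3 ≠ 0 := pow_ne_zero 3 (ne_of_gt hx)
  field_simp
  ring

lemma aux_int_main {K T R : ℝ} (hT : 0 < T) (hTR : T ≤ R) :
    ∫ u in Ioc T R, (K + 0.059 * Real.log u) * (2 / u ^ 3)
      = (K + 0.0295 + 0.059 * Real.log T) * (T ^ 2)⁻¹
        - (K + 0.0295 + 0.059 * Real.log R) * (R ^ 2)⁻¹ := by
  rw [← intervalIntegral.integral_of_le hTR]
  have hpos : ∀ x ∈ uIcc T R, 0 < x := by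
    intro x hx
    rw [uIcc_of_le hTR] at hx
    exact lt_of_lt_of_le hT hx.1
  have := intervalIntegral.integral_eq_sub_of_hasDerivAt
    (f := fun u : ℝ => -((K + 0.0295 + 0.059 * Real.log u) * (u ^ 2)⁻¹))
    (f' := fun u => (K + 0.059 * Real.log u) * (2 / u ^ 3))
    (fun x hx => aux_deriv_main (hpos x hx))
    (by
      apply ContinuousOn.intervalIntegrable
      apply ContinuousOn.mul
      · exact continuousOn_const.add (continuousOn_const.mul
          (fun x hx => (Real.continuousAt_log (ne_of_gt (hpos x hx))).continuousWithinAt))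
      · exact continuousOn_const.div (continuousOn_pow 3)
          (fun x hx => pow_ne_zero 3 (ne_of_gt (hpos x hx))))
  rw [this]; ring

lemma aux_fubini (S : ℝ → ℝ) {T R : ℝ} (hT : 0 < T) (hTR : T ≤ R)
    (hSi : IntegrableOn S (Ioc T R)) :
    ∫ t in Ioc T R, S t * ((t ^ 2)⁻¹ - (R ^ 2)⁻¹)
      = ∫ u in Ioc T R, (∫ t in Ioc T u, S t) * (2 / u ^ 3) := by
  set μ := volume.restrict (Ioc T R) with hμ
  have hA : MeasurableSet {p : ℝ × ℝ | p.1 < p.2} := measurableSet_lt measurable_fst measurable_snd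
  set k : ℝ × ℝ → ℝ := ({p : ℝ × ℝ | p.1 < p.2}).indicator (fun p => S p.1 * (2 / p.2 ^ 3)) with hk
  have hg : Integrable (fun u : ℝ => 2 / u ^ 3) μ := by
    apply IntegrableOn.mono_set _ Ioc_subset_Icc_self
    exact (continuousOn_const.div (continuousOn_pow 3)
      (fun x hx => pow_ne_zero 3 (ne_of_gt (lt_of_lt_of_le hT hx.1)))).integrableOn_Icc
  have hprod : Integrable (fun p : ℝ × ℝ => S p.1 * (2 / p.2 ^ 3)) (μ.prod μ) :=
    hSi.mul_prod hg
  have hkint : Integrable k (μ.prod μ) := by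
    refine (hprod.norm).mono' (hprod.aestronglyMeasurable.indicator hA) ?_
    filter_upwards with p
    rw [hk]
    by_cases hp : p ∈ {p : ℝ × ℝ | p.1 < p.2}
    · rw [indicator_of_mem hp]
    · rw [indicator_of_notMem hp]
      simp only [norm_zero, Real.norm_eq_abs, abs_mul]
      positivity
  have hLHS : ∫ t in Ioc T R, S t * ((t ^ 2)⁻¹ - (R ^ 2)⁻¹) = ∫ t, (∫ u, k (t, u) ∂μ) ∂μ := by
    apply setIntegral_congr_fun measurableSet_Ioc
    intro t ht
    have hk1 : ∀ u : ℝ, k (t, u) = (Ioi t).indicator (fun u => S t * (2 / u ^ 3)) u := by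
      intro u
      simp only [hk, Set.indicator_apply, Set.mem_setOf_eq, Set.mem_Ioi, Set.mem_Iio]
    have h1 : ∫ u, k (t, u) ∂μ
        = ∫ u in Ioc T R, (Ioi t).indicator (fun u => S t * (2 / u ^ 3)) u := by
      rw [hμ]; exact integral_congr_ae (Filter.Eventually.of_forall hk1)
    have h2 : Ioc T R ∩ Ioi t = Ioc t R := by
      rw [Ioc_inter_Ioi, sup_of_le_right (le_of_lt ht.1)]
    have h3 : ∫ u, k (t, u) ∂μ = S t * ((t ^ 2)⁻¹ - (R ^ 2)⁻¹) := by
      rw [h1, setIntegral_indicator measurableSet_Ioi, h2,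
        integral_const_mul, aux_int_cube (lt_trans hT ht.1) ht.2]
    exact h3.symm
  have hRHS : ∫ u in Ioc T R, (∫ t in Ioc T u, S t) * (2 / u ^ 3) = ∫ u, (∫ t, k (t, u) ∂μ) ∂μ := by
    apply setIntegral_congr_fun measurableSet_Ioc
    intro u hu
    show (∫ t in Ioc T u, S t) * (2 / u ^ 3) = ∫ t, k (t, u) ∂μ
    have hk1 : ∀ t : ℝ, k (t, u) = (Iio u).indicator (fun t => S t * (2 / u ^ 3)) t := by
      intro t
      simp only [hk, Set.indicator_apply, Set.mem_setOf_eq, Set.mem_Ioi, Set.mem_Iio]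
    have h1 : ∫ t, k (t, u) ∂μ
        = ∫ t in Ioc T R, (Iio u).indicator (fun t => S t * (2 / u ^ 3)) t := by
      rw [hμ]; exact integral_congr_ae (Filter.Eventually.of_forall hk1)
    have h2 : Ioc T R ∩ Iio u = Ioo T u := by
      ext x
      simp only [mem_inter_iff, mem_Ioc, mem_Ioo, mem_Iio]
      constructor
      · rintro ⟨⟨h3, _⟩, h5⟩; exact ⟨h3, h5⟩
      · rintro ⟨h3, h4⟩; exact ⟨⟨h3, le_trans (le_of_lt h4) hu.2⟩, h4⟩
    have h3 : ∫ t, k (t, u) ∂μ = (∫ t in Ioc T u, S t) * (2 / u ^ 3) := by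
      rw [h1, setIntegral_indicator measurableSet_Iio, h2,
        ← integral_Ioc_eq_integral_Ioo, integral_mul_const]
    exact h3.symm
  rw [hLHS, hRHS]
  exact integral_integral_swap (f := fun t u => k (t, u)) hkint

lemma aux_tendsto (M BT : ℝ) (hBTpos : 0 ≤ BT) :
    Tendsto (fun R : ℝ => M + (2.067 + BT + 0.059 * Real.log R) * (R ^ 2)⁻¹)
      atTop (𝓝 M) := by
  have h0 : Tendsto (fun R : ℝ => (2.067 + BT + 0.059 * Real.log R) * (R ^ 2)⁻¹)
      atTop (𝓝 0) := by
    have t2 : Tendsto (fun R : ℝ => R⁻¹) atTop (𝓝 (0:ℝ)) := tendsto_inv_atTop_zero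
    have t1 : Tendsto (fun R : ℝ => (R ^ 2)⁻¹) atTop (𝓝 (0:ℝ)) := by
      have := t2.mul t2
      simp only [mul_zero] at this
      apply this.congr
      intro x
      rw [pow_two, mul_inv]
    have hup : Tendsto (fun R : ℝ => (2.067 + BT) * (R ^ 2)⁻¹ + 0.059 * R⁻¹) atTop (𝓝 0) := by
      have := (t1.const_mul (2.067 + BT)).add (t2.const_mul 0.059)
      simpa using this
    apply tendsto_of_tendsto_of_tendsto_of_le_of_le' tendsto_const_nhds hup
    · filter_upwards [eventually_ge_atTop (1:ℝ)] with R hR1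
      have h3 : 0 ≤ Real.log R := Real.log_nonneg hR1
      have h4 : (0:ℝ) ≤ (R ^ 2)⁻¹ := by positivity
      positivity
    · filter_upwards [eventually_ge_atTop (1:ℝ)] with R hR1
      have hR0 : (0:ℝ) < R := lt_of_lt_of_le one_pos hR1
      have hlog : Real.log R ≤ R := le_trans (Real.log_le_sub_one_of_pos hR0) (by linarith)
      have h1 : 0.059 * Real.log R * (R ^ 2)⁻¹ ≤ 0.059 * R⁻¹ := by
        have h5 : Real.log R * (R ^ 2)⁻¹ ≤ R * (R ^ 2)⁻¹ :=
          mul_le_mul_of_nonneg_right hlog (by positivity)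
        have h2 : R * (R ^ 2)⁻¹ = R⁻¹ := by field_simp
        nlinarith
      have expand : (2.067 + BT + 0.059 * Real.log R) * (R ^ 2)⁻¹
          = (2.067 + BT) * (R ^ 2)⁻¹ + 0.059 * Real.log R * (R ^ 2)⁻¹ := by ring
      rw [expand]
      linarith
  simpa using tendsto_const_nhds.add h0


/-- Lemma 2: for `T ≥ 2π`, `|E₂(T)| = |∫_T^∞ Q(t)/t² dt| ≤ (4.27 + 0.12 log T)/T²`,
assuming the explicit bounds of Trudgian relating `Q` to `S` and bounding `S₁`. -/
theorem E2_bound (S : ℝ → ℝ) (hS : LocallyIntegrable S) (c : ℝ)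
    (hQS : ∀ t : ℝ, 2 * π ≤ t → |Q t - S t| ≤ 0.2 / t)
    (hS₁ : ∀ T : ℝ, 2 * π ≤ T →
      |(∫ t in Ioc (0:ℝ) T, S t) - c| ≤ 2.067 + 0.059 * Real.log T) :
    ∀ T : ℝ, 2 * π ≤ T →
      |∫ t in Ioi T, Q t / t ^ 2| ≤ (4.27 + 0.12 * Real.log T) / T ^ 2 := by

  intro T hT
  have hπ := Real.pi_gt_three
  have hT1 : (1:ℝ) < T := by linarith
  have hT0 : (0:ℝ) < T := by linarith
  have hlogT : 0 < Real.log T := Real.log_pos hT1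
  by_cases hint : IntegrableOn (fun t => Q t / t ^ 2) (Ioi T)
  case neg =>
    rw [integral_undef hint]
    simp only [abs_zero]
    apply div_nonneg (by linarith) (by positivity)
  case pos =>
  set S₁ : ℝ → ℝ := fun u => ∫ t in Ioc (0:ℝ) u, S t with hS₁def
  set BT : ℝ := 2.067 + 0.059 * Real.log T with hBTdef
  have hBT : |S₁ T - c| ≤ BT := hS₁ T hT
  have hBTpos : 0 ≤ BT := le_trans (abs_nonneg _) hBT
  set M : ℝ := (4.2635 + 0.118 * Real.log T) * (T ^ 2)⁻¹ with hM
  -- the key finite-R bound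
  have key : ∀ R : ℝ, T ≤ R →
      |∫ t in T..R, Q t / t ^ 2| ≤ M + (2.067 + BT + 0.059 * Real.log R) * (R ^ 2)⁻¹ := by
    intro R hR
    have hR0 : (0:ℝ) < R := lt_of_lt_of_le hT0 hR
    have hlogR : 0 < Real.log R := Real.log_pos (lt_of_lt_of_le hT1 hR)
    rw [intervalIntegral.integral_of_le hR]
    -- integrability facts
    have hS_int : IntegrableOn S (Ioc T R) :=
      (hS.integrableOn_isCompact isCompact_Icc).mono_set Ioc_subset_Icc_self
    have hSt2 : IntegrableOn (fun t => S t * (t ^ 2)⁻¹) (Ioc T R) := by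
      apply Integrable.mono' (hS_int.norm.mul_const ((T ^ 2)⁻¹))
        (hS_int.aestronglyMeasurable.mul ((measurable_id.pow_const 2).inv.aestronglyMeasurable))
      filter_upwards [ae_restrict_mem measurableSet_Ioc] with t ht
      have h1 : (t ^ 2)⁻¹ ≤ (T ^ 2)⁻¹ :=
        inv_anti₀ (by positivity) (pow_le_pow_left₀ hT0.le (le_of_lt ht.1) 2)
      have h2 : (0:ℝ) < t := lt_trans hT0 ht.1
      calc ‖S t * (t ^ 2)⁻¹‖ = ‖S t‖ * (t ^ 2)⁻¹ := by
            rw [norm_mul, Real.norm_eq_abs ((t^2)⁻¹), abs_of_nonneg (by positivity)]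
        _ ≤ ‖S t‖ * (T ^ 2)⁻¹ := mul_le_mul_of_nonneg_left h1 (norm_nonneg _)
    have hf_int : IntegrableOn (fun t => Q t / t ^ 2) (Ioc T R) := hint.mono_set Ioc_subset_Ioi_self
    have hdiff_int : IntegrableOn (fun t => Q t / t ^ 2 - S t * (t ^ 2)⁻¹) (Ioc T R) :=
      hf_int.sub hSt2
    have hsplit : ∫ t in Ioc T R, Q t / t ^ 2
        = (∫ t in Ioc T R, (Q t / t ^ 2 - S t * (t ^ 2)⁻¹)) + ∫ t in Ioc T R, S t * (t ^ 2)⁻¹ := by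
      rw [← integral_add hdiff_int hSt2]
      apply integral_congr_ae
      filter_upwards with t
      ring
    -- Bound 1 : the Q-S part
    have hb1 : |∫ t in Ioc T R, (Q t / t ^ 2 - S t * (t ^ 2)⁻¹)| ≤ 0.1 * (T ^ 2)⁻¹ := by
      have hgint : IntegrableOn (fun t : ℝ => 0.1 * (2 / t ^ 3)) (Ioc T R) := by
        apply IntegrableOn.mono_set _ Ioc_subset_Icc_self
        exact (continuousOn_const.mul (continuousOn_const.div (continuousOn_pow 3)
          (fun x hx => pow_ne_zero 3 (ne_of_gt (lt_of_lt_of_le hT0 hx.1))))).integrableOn_Icc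
      have hpt : ∀ᵐ t ∂(volume.restrict (Ioc T R)),
          ‖Q t / t ^ 2 - S t * (t ^ 2)⁻¹‖ ≤ 0.1 * (2 / t ^ 3) := by
        filter_upwards [ae_restrict_mem measurableSet_Ioc] with t ht
        have h2 : (0:ℝ) < t := lt_trans hT0 ht.1
        have h3 : 2 * π ≤ t := le_trans hT (le_of_lt ht.1)
        have h4 : Q t / t ^ 2 - S t * (t ^ 2)⁻¹ = (Q t - S t) / t ^ 2 := by
          field_simp
        rw [h4, Real.norm_eq_abs, abs_div, abs_of_pos (by positivity : (0:ℝ) < t ^ 2)]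
        have h5 := hQS t h3
        calc |Q t - S t| / t ^ 2 ≤ (0.2 / t) / t ^ 2 :=
              by gcongr
          _ = 0.1 * (2 / t ^ 3) := by field_simp; ring
      have hb := norm_integral_le_of_norm_le hgint hpt
      rw [integral_const_mul, aux_int_cube hT0 hR] at hb
      rw [← Real.norm_eq_abs]
      have h2 : (0:ℝ) < (R ^ 2)⁻¹ := by positivity
      calc ‖∫ t in Ioc T R, (Q t / t ^ 2 - S t * (t ^ 2)⁻¹)‖
          ≤ 0.1 * ((T ^ 2)⁻¹ - (R ^ 2)⁻¹) := hb
        _ ≤ 0.1 * (T ^ 2)⁻¹ := by nlinarith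
    -- additivity: ∫_T^u S = S₁ u - S₁ T
    have hFR : ∀ u : ℝ, T ≤ u → (∫ t in Ioc T u, S t) = S₁ u - S₁ T := by
      intro u hu
      have h1 : IntegrableOn S (Ioc 0 T) :=
        (hS.integrableOn_isCompact isCompact_Icc).mono_set Ioc_subset_Icc_self
      have h2 : IntegrableOn S (Ioc T u) :=
        (hS.integrableOn_isCompact isCompact_Icc).mono_set Ioc_subset_Icc_self
      have h3 : Ioc (0:ℝ) T ∪ Ioc T u = Ioc 0 u := Ioc_union_Ioc_eq_Ioc hT0.le hu
      have h4 : S₁ u = S₁ T + ∫ t in Ioc T u, S t := by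
        rw [hS₁def]
        simp only
        rw [← h3, setIntegral_union (Ioc_disjoint_Ioc_of_le le_rfl) measurableSet_Ioc h1 h2]
      rw [h4]; ring
    have hFb : ∀ u : ℝ, T ≤ u → |∫ t in Ioc T u, S t| ≤ BT + (2.067 + 0.059 * Real.log u) := by
      intro u hu
      rw [hFR u hu]
      have h1 := hS₁ u (le_trans hT hu)
      calc |S₁ u - S₁ T| = |(S₁ u - c) - (S₁ T - c)| := by ring_nf
        _ ≤ |S₁ u - c| + |S₁ T - c| := abs_sub _ _
        _ ≤ (2.067 + 0.059 * Real.log u) + BT := add_le_add h1 hBT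
        _ = BT + (2.067 + 0.059 * Real.log u) := by ring
    -- split off the boundary term
    have hc1 : IntegrableOn (fun t => S t * (R ^ 2)⁻¹) (Ioc T R) := hS_int.mul_const _
    have hc2 : IntegrableOn (fun t => S t * ((t ^ 2)⁻¹ - (R ^ 2)⁻¹)) (Ioc T R) := by
      apply Integrable.congr (hSt2.sub hc1)
      filter_upwards with t
      simp only [Pi.sub_apply]
      ring
    have hsplit2 : ∫ t in Ioc T R, S t * (t ^ 2)⁻¹
        = (∫ t in Ioc T R, S t * ((t ^ 2)⁻¹ - (R ^ 2)⁻¹)) + (∫ t in Ioc T R, S t) * (R ^ 2)⁻¹ := by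
      rw [← integral_mul_const, ← integral_add hc2 hc1]
      apply integral_congr_ae
      filter_upwards with t
      ring
    have hfub := aux_fubini S hT0 hR hS_int
    -- bound the fubini integral
    have hb2 : |∫ u in Ioc T R, (∫ t in Ioc T u, S t) * (2 / u ^ 3)|
        ≤ ((2.067 + BT) + 0.0295 + 0.059 * Real.log T) * (T ^ 2)⁻¹ := by
      have hgint : IntegrableOn
          (fun u : ℝ => ((2.067 + BT) + 0.059 * Real.log u) * (2 / u ^ 3)) (Ioc T R) := by
        apply IntegrableOn.mono_set _ Ioc_subset_Icc_self
        apply ContinuousOn.integrableOn_Icc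
        apply ContinuousOn.mul
        · exact continuousOn_const.add (continuousOn_const.mul
            (fun x hx => (Real.continuousAt_log
              (ne_of_gt (lt_of_lt_of_le hT0 hx.1))).continuousWithinAt))
        · exact continuousOn_const.div (continuousOn_pow 3)
            (fun x hx => pow_ne_zero 3 (ne_of_gt (lt_of_lt_of_le hT0 hx.1)))
      have hpt : ∀ᵐ u ∂(volume.restrict (Ioc T R)),
          ‖(∫ t in Ioc T u, S t) * (2 / u ^ 3)‖
            ≤ ((2.067 + BT) + 0.059 * Real.log u) * (2 / u ^ 3) := by
        filter_upwards [ae_restrict_mem measurableSet_Ioc] with u hu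
        have h2 : (0:ℝ) < u := lt_trans hT0 hu.1
        have h5 : (0:ℝ) ≤ 2 / u ^ 3 := by positivity
        rw [Real.norm_eq_abs, abs_mul, abs_of_nonneg h5]
        apply mul_le_mul_of_nonneg_right _ h5
        calc |∫ t in Ioc T u, S t| ≤ BT + (2.067 + 0.059 * Real.log u) := hFb u (le_of_lt hu.1)
          _ = (2.067 + BT) + 0.059 * Real.log u := by ring
      have hb := norm_integral_le_of_norm_le hgint hpt
      rw [aux_int_main hT0 hR] at hb
      have h6 : 0 ≤ ((2.067 + BT) + 0.0295 + 0.059 * Real.log R) * (R ^ 2)⁻¹ :=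
        mul_nonneg (by linarith) (by positivity)
      rw [← Real.norm_eq_abs]
      linarith
    -- bound the boundary term
    have hb3 : |(∫ t in Ioc T R, S t) * (R ^ 2)⁻¹|
        ≤ (2.067 + BT + 0.059 * Real.log R) * (R ^ 2)⁻¹ := by
      rw [abs_mul, abs_of_nonneg (by positivity : (0:ℝ) ≤ (R ^ 2)⁻¹)]
      apply mul_le_mul_of_nonneg_right _ (by positivity)
      calc |∫ t in Ioc T R, S t| ≤ BT + (2.067 + 0.059 * Real.log R) := hFb R hR
        _ = 2.067 + BT + 0.059 * Real.log R := by ring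
    -- combine
    rw [hsplit, hsplit2, hfub]
    have total := abs_add_le (∫ t in Ioc T R, (Q t / t ^ 2 - S t * (t ^ 2)⁻¹))
      ((∫ u in Ioc T R, (∫ t in Ioc T u, S t) * (2 / u ^ 3))
        + (∫ t in Ioc T R, S t) * (R ^ 2)⁻¹)
    have total2 := abs_add_le (∫ u in Ioc T R, (∫ t in Ioc T u, S t) * (2 / u ^ 3))
      ((∫ t in Ioc T R, S t) * (R ^ 2)⁻¹)
    rw [hM, hBTdef]
    rw [hBTdef] at hb2 hb3
    set A := ∫ t in Ioc T R, (Q t / t ^ 2 - S t * (t ^ 2)⁻¹) with hA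
    set B := ∫ u in Ioc T R, (∫ t in Ioc T u, S t) * (2 / u ^ 3) with hB
    set C := (∫ t in Ioc T R, S t) * (R ^ 2)⁻¹ with hC
    have habs1 : |A + (B + C)| ≤ |A| + (|B| + |C|) :=
      le_trans (abs_add_le A (B + C)) (by linarith [abs_add_le B C])
    have hEq : 0.1 * (T ^ 2)⁻¹
        + (2.067 + (2.067 + 0.059 * Real.log T) + 0.0295 + 0.059 * Real.log T) * (T ^ 2)⁻¹
        = (4.2635 + 0.118 * Real.log T) * (T ^ 2)⁻¹ := by ring
    linarith [hb1, hb2, hb3, habs1]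
  -- limits
  have htend : Tendsto (fun R => |∫ t in T..R, Q t / t ^ 2|) atTop (𝓝 |∫ t in Ioi T, Q t / t ^ 2|) :=
    (intervalIntegral_tendsto_integral_Ioi T hint tendsto_id).abs
  have heps : Tendsto (fun R : ℝ => M + (2.067 + BT + 0.059 * Real.log R) * (R ^ 2)⁻¹)
      atTop (𝓝 M) := aux_tendsto M BT hBTpos
  have hev : (fun R => |∫ t in T..R, Q t / t ^ 2|)
      ≤ᶠ[atTop] fun R => M + (2.067 + BT + 0.059 * Real.log R) * (R ^ 2)⁻¹ := by
    filter_upwards [eventually_ge_atTop T] with R hR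
    exact key R hR
  have hMle : |∫ t in Ioi T, Q t / t ^ 2| ≤ M := le_of_tendsto_of_tendsto htend heps hev
  calc |∫ t in Ioi T, Q t / t ^ 2| ≤ M := hMle
    _ ≤ (4.27 + 0.12 * Real.log T) / T ^ 2 := by
      rw [hM, div_eq_mul_inv]
      apply mul_le_mul_of_nonneg_right (by linarith) (by positivity)
end
end
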